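/- Let L be a unimodular subgroup of ℤ^n and let T ⊆ {1,…,n}. Then the image π_T(L) of L under the coordinate projection π_T : ℤ^n → ℤ^T is a unimodular subgroup of ℤ^T. -/

import Mathlib

open Matrix

/-- A sublattice `L ⊆ ℤ^ι` is *unimodular* if it is the image of an injective linear map given
by an integer matrix `B` with linearly independent columns, all of whose maximal minors lie in
`{0, 1, -1}`. -/
def IsUnimodular {ι : Type*} [Fintype ι] (L : Submodule ℤ (ι → ℤ)) : Prop :=
  ∃ (m : ℕ) (B : Matrix ι (Fin m) ℤ),
    LinearIndependent ℤ B.transpose ∧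
    (∀ r : Fin m ↪ ι, (B.submatrix r id).det ∈ ({0, 1, -1} : Set ℤ)) ∧
    L = LinearMap.range B.mulVecLin

section Aux

lemma sign_mem_iff {x : ℤ} : x ∈ ({0, 1, -1} : Set ℤ) ↔ x ∈ Set.range SignType.cast := by
  simp only [Set.mem_insert_iff, Set.mem_singleton_iff]
  constructor
  · rintro (rfl | rfl | rfl)
    exacts [⟨0, by simp⟩, ⟨1, by simp⟩, ⟨-1, by simp⟩]
  · rintro ⟨s, rfl⟩
    cases s <;> simp

/-- The coordinatewise cast `ℤ → ℚ` as a `ℤ`-linear map. -/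
noncomputable def castMap (ι : Type*) : (ι → ℤ) →ₗ[ℤ] (ι → ℚ) :=
  LinearMap.compLeft (Algebra.linearMap ℤ ℚ) ι

lemma castMap_injective (ι : Type*) : Function.Injective (castMap ι) := by
  intro a b hab
  funext i
  have := congrFun hab i
  simpa [castMap, LinearMap.compLeft_apply] using this

lemma liQ_of_liZ {ι κ : Type*} {v : κ → ι → ℤ}
    (h : LinearIndependent ℤ v) :
    LinearIndependent ℚ (fun j => (fun i => ((v j i : ℤ) : ℚ))) := by
  have h1 : LinearIndependent ℤ (⇑(castMap ι) ∘ v) :=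
    h.map' _ (LinearMap.ker_eq_bot.mpr (castMap_injective ι))
  rw [LinearIndependent.iff_fractionRing ℤ ℚ] at h1
  have hfun : (fun j => (fun i => ((v j i : ℤ) : ℚ))) = ⇑(castMap ι) ∘ v := by
    funext j i
    simp [castMap, LinearMap.compLeft_apply]
  rw [hfun]
  exact h1

lemma liZ_of_liQ {ι κ : Type*} {v : κ → ι → ℤ}
    (h : LinearIndependent ℚ (fun j => (fun i => ((v j i : ℤ) : ℚ)))) :
    LinearIndependent ℤ v := by
  have h1 : LinearIndependent ℚ (⇑(castMap ι) ∘ v) := by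
    have hfun : (fun j => (fun i => ((v j i : ℤ) : ℚ))) = ⇑(castMap ι) ∘ v := by
      funext j i
      simp [castMap, LinearMap.compLeft_apply]
    rw [← hfun]
    exact h
  rw [← LinearIndependent.iff_fractionRing ℤ ℚ] at h1
  exact h1.of_comp (castMap ι)

lemma map_cast_mulVec {ι κ : Type*} [Fintype κ] (M : Matrix ι κ ℤ) (v : κ → ℤ) :
    (M.map (fun x : ℤ => (x : ℚ))) *ᵥ (fun j => ((v j : ℤ) : ℚ)) =
      fun i => (((M *ᵥ v) i : ℤ) : ℚ) := by
  funext i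
  simp only [mulVec, dotProduct, map_apply]
  push_cast
  rfl

/-- enumerate a subset of the range of a finite family -/
lemma exists_enum {ι V : Type*} [Fintype ι] (f : ι → V) {s : Set V}
    (hsub : s ⊆ Set.range f) :
    ∃ (k : ℕ) (g : Fin k → ι), Function.Injective (f ∘ g) ∧ Set.range (f ∘ g) = s := by
  have hfin : s.Finite := (Set.finite_range f).subset hsub
  classical
  let e : Fin hfin.toFinset.card → hfin.toFinset := hfin.toFinset.equivFin.symm
  have hmem : ∀ i, ((e i : V)) ∈ Set.range f := fun i =>
    hsub (hfin.mem_toFinset.mp (e i).2)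
  choose g hg using hmem
  have hcomp : f ∘ g = fun i => ((e i : V)) := funext hg
  refine ⟨hfin.toFinset.card, g, ?_, ?_⟩
  · rw [hcomp]
    exact Subtype.val_injective.comp (hfin.toFinset.equivFin.symm.injective)
  · rw [hcomp]
    have : (fun i => ((e i : V))) = Subtype.val ∘ e := rfl
    rw [this, (hfin.toFinset.equivFin.symm.surjective).range_comp]
    rw [Subtype.range_coe_subtype]
    ext x
    simp [hfin.mem_toFinset]

/-- a matrix over `ℚ` with linearly independent columns has a nonsingular
square row-submatrix -/
lemma exists_sq_det_ne_zero {ι : Type*} [Fintype ι] {k : ℕ} (A : Matrix ι (Fin k) ℚ)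
    (h : LinearIndependent ℚ Aᵀ) : ∃ r : Fin k ↪ ι, (A.submatrix r id).det ≠ 0 := by
  classical
  have hrank : A.rank = k := by
    have h1 : Aᵀ.rank = k := by simpa using LinearIndependent.rank_matrix (M := Aᵀ) h
    rw [← rank_transpose]
    simpa using h1
  have hspan : Submodule.span ℚ (Set.range A) = ⊤ := by
    apply Submodule.eq_top_of_finrank_eq
    rw [show Set.range A = Set.range A.row from rfl, ← rank_eq_finrank_span_row, hrank]
    simp [Module.finrank_fin_fun]
  obtain ⟨s, hsub, hsp, hli⟩ := exists_linearIndependent ℚ (Set.range A)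
  obtain ⟨k', g, hinj, hrange⟩ := exists_enum A hsub
  have hli' : LinearIndependent ℚ (A ∘ g) := by
    rw [← hrange] at hli
    exact (linearIndepOn_range_iff hinj id).mp hli
  have hsp' : Submodule.span ℚ (Set.range (A ∘ g)) = ⊤ := by
    rw [hrange, hsp, hspan]
  have hk : k' = k := by
    let b : Module.Basis (Fin k') ℚ (Fin k → ℚ) := Module.Basis.mk hli' (by rw [hsp'])
    have := Module.finrank_eq_card_basis b
    simpa [Module.finrank_fin_fun] using this.symm
  subst hk
  have hg : Function.Injective g := hinj.of_comp
  refine ⟨⟨g, hg⟩, ?_⟩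
  intro hdet
  obtain ⟨v, hv0, hv⟩ := (exists_vecMul_eq_zero_iff).mpr hdet
  rw [Fintype.linearIndependent_iff] at hli'
  apply hv0
  funext i
  refine hli' v ?_ i
  funext j
  have := congrFun hv j
  simp only [vecMul, dotProduct, submatrix_apply, id, Pi.zero_apply] at this
  simp only [Finset.sum_apply, Pi.smul_apply, smul_eq_mul, Function.comp_apply, Pi.zero_apply]
  exact this

/-- every square submatrix of `[1; D]` has det equal to (± the det of) a maximal minor -/
lemma tu_of_fromRows_one {m : ℕ} {κ : Type*} (D : Matrix κ (Fin m) ℤ)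
    (h : ∀ s : Fin m ↪ (Fin m ⊕ κ),
      ((fromRows (1 : Matrix (Fin m) (Fin m) ℤ) D).submatrix s id).det ∈ ({0, 1, -1} : Set ℤ)) :
    D.IsTotallyUnimodular := by
  classical
  intro j f g hf hg
  set M := fromRows (1 : Matrix (Fin m) (Fin m) ℤ) D with hMdef
  let α := {p : Fin m // p ∉ Set.range g}
  let σ : Fin j ⊕ α ≃ Fin m :=
    (Equiv.sumCongr (Equiv.ofInjective g hg) (Equiv.refl α)).trans
      (Equiv.sumCompl (· ∈ Set.range g))
  have hσ1 : ∀ i, σ (Sum.inl i) = g i := fun i => by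
    simp [σ, Equiv.sumCompl]
  have hσ2 : ∀ a : α, σ (Sum.inr a) = a.val := fun a => by
    simp [σ, Equiv.sumCompl]
  let Rfun : Fin j ⊕ α → Fin m ⊕ κ := Sum.elim (Sum.inr ∘ f) (Sum.inl ∘ Subtype.val)
  have hRinj : Function.Injective Rfun := by
    rintro (a | a) (b | b) hab <;>
      simp only [Rfun, Sum.elim_inl, Sum.elim_inr, Function.comp_apply,
        Sum.inr.injEq, Sum.inl.injEq] at hab
    · exact congrArg Sum.inl (hf hab)
    · exact absurd hab (by simp)
    · exact absurd hab (by simp)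
    · exact congrArg Sum.inr (Subtype.ext hab)
  have key := h ⟨Rfun ∘ ⇑σ.symm, hRinj.comp σ.symm.injective⟩
  simp only [Function.Embedding.coeFn_mk] at key
  have h2 : ((M.submatrix (Rfun ∘ ⇑σ.symm) id).det) = (M.submatrix Rfun ⇑σ).det := by
    have hcomp : (Rfun ∘ ⇑σ.symm) ∘ ⇑σ = Rfun := by
      funext x
      show Rfun (σ.symm (σ x)) = Rfun x
      rw [Equiv.symm_apply_apply]
    have hid : (id ∘ ⇑σ) = ⇑σ := rfl
    rw [← det_submatrix_equiv_self σ (M.submatrix (Rfun ∘ ⇑σ.symm) id), submatrix_submatrix,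
      hcomp, hid]
  have h3 : M.submatrix Rfun ⇑σ =
      fromBlocks (D.submatrix f g) (D.submatrix f (Subtype.val : α → Fin m)) 0 1 := by
    ext (a | a) (b | b)
    · simp [Rfun, hσ1, hMdef]
    · simp [Rfun, hσ2, hMdef]
    · have hne : (a : Fin m) ≠ g b := fun hc => a.2 ⟨b, hc.symm⟩
      simp [Rfun, hσ1, hMdef, one_apply_ne hne]
    · simp only [submatrix_apply, Rfun, Sum.elim_inr, Function.comp_apply, hσ2, hMdef,
        fromRows_apply_inl, fromBlocks_apply₂₂]
      rw [one_apply, one_apply]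
      by_cases hab : a = b
      · rw [if_pos (congrArg Subtype.val hab), if_pos hab]
      · rw [if_neg (fun hc => hab (Subtype.ext hc)), if_neg hab]
  rw [h2, h3, det_fromBlocks_zero₂₁, det_one, mul_one] at key
  rw [← sign_mem_iff]
  simpa using key

/-- a matrix with an identity row-submatrix whose maximal minors are all `0, ±1`
is totally unimodular. -/
lemma isTU_of_minors {ι : Type*} [Fintype ι] [DecidableEq ι] {m : ℕ}
    (B : Matrix ι (Fin m) ℤ) (r : Fin m ↪ ι) (hone : B.submatrix r id = 1)
    (hmin : ∀ s : Fin m ↪ ι, (B.submatrix s id).det ∈ ({0, 1, -1} : Set ℤ)) :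
    B.IsTotallyUnimodular := by
  classical
  let κ := {i : ι // i ∉ Set.range ⇑r}
  let e : Fin m ⊕ κ ≃ ι :=
    (Equiv.sumCongr (Equiv.ofInjective ⇑r r.injective) (Equiv.refl κ)).trans
      (Equiv.sumCompl (· ∈ Set.range ⇑r))
  have he1 : ∀ p, e (Sum.inl p) = r p := fun p => by simp [e, Equiv.sumCompl]
  have he2 : ∀ x : κ, e (Sum.inr x) = x.val := fun x => by simp [e, Equiv.sumCompl]
  set D := B.submatrix (Subtype.val : κ → ι) id with hDdef
  have hM : B.submatrix ⇑e id = fromRows (1 : Matrix (Fin m) (Fin m) ℤ) D := by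
    ext (p | x) q
    · have := congrFun (congrFun hone p) q
      simpa [he1] using this
    · simp [he2, hDdef]
  have hD : D.IsTotallyUnimodular := by
    apply tu_of_fromRows_one
    intro s
    rw [← hM, submatrix_submatrix]
    exact hmin ⟨⇑e ∘ ⇑s, e.injective.comp s.injective⟩
  have hB : B = (fromRows (1 : Matrix (Fin m) (Fin m) ℤ) D).submatrix ⇑e.symm id := by
    rw [← hM, submatrix_submatrix]
    simp
  rw [hB]
  exact ((one_fromRows_isTotallyUnimodular_iff D).mpr hD).submatrix _ _

lemma map_funLeft_range {n : ℕ} {ι' : Type*} [Fintype ι'] {m : ℕ}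
    (B : Matrix (Fin n) (Fin m) ℤ) (c : ι' → Fin n) :
    Submodule.map (LinearMap.funLeft ℤ ℤ c) (LinearMap.range B.mulVecLin)
      = LinearMap.range (B.submatrix c id).mulVecLin := by
  rw [← LinearMap.range_comp]
  congr 1

/-- the range of `mulVecLin` of a totally unimodular integer matrix is a unimodular lattice -/
lemma isUnimodular_range_of_TU {ι : Type*} [Fintype ι] [DecidableEq ι] {m : ℕ}
    (M : Matrix ι (Fin m) ℤ) (hM : M.IsTotallyUnimodular) :
    IsUnimodular (LinearMap.range M.mulVecLin) := by
  classical
  set Mq := M.map (fun x : ℤ => (x : ℚ)) with hMq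
  obtain ⟨s, hsub, hsp, hli⟩ := exists_linearIndependent ℚ (Set.range Mqᵀ)
  obtain ⟨k, g, hinj, hrange⟩ := exists_enum Mqᵀ hsub
  have hg : Function.Injective g := hinj.of_comp
  set C := M.submatrix id g with hCdef
  set Cq := Mq.submatrix id g with hCqdef
  have hCqT : Cqᵀ = Mqᵀ ∘ g := by funext j; rfl
  have hliCq : LinearIndependent ℚ Cqᵀ := by
    rw [hCqT]
    rw [← hrange] at hli
    exact (linearIndepOn_range_iff hinj id).mp hli
  have hliC : LinearIndependent ℤ Cᵀ := by
    apply liZ_of_liQ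
    exact hliCq
  have hminC : ∀ rr : Fin k ↪ ι, ((C.submatrix rr id).det) ∈ ({0, 1, -1} : Set ℤ) := by
    intro rr
    rw [sign_mem_iff]
    have : C.submatrix ⇑rr id = M.submatrix ⇑rr g := by
      rw [hCdef, submatrix_submatrix]; rfl
    rw [this]
    exact hM k rr g rr.injective hg
  -- choose a nonsingular square submatrix of C
  obtain ⟨r0, hr0⟩ := exists_sq_det_ne_zero Cq (by exact hliCq)
  have hCqC : Cq = C.map (fun x : ℤ => (x : ℚ)) := rfl
  set A0 := C.submatrix ⇑r0 id with hA0def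
  have hA0q : Cq.submatrix ⇑r0 id = A0.map (fun x : ℤ => (x : ℚ)) := rfl
  have hdetcast : ((A0.det : ℤ) : ℚ) = (Cq.submatrix ⇑r0 id).det := by
    rw [hA0q]
    exact (RingHom.map_det (Int.castRingHom ℚ) A0)
  have hdetA0 : A0.det ≠ 0 := by
    intro h0
    apply hr0
    rw [← hdetcast, h0, Int.cast_zero]
  have hunitA0 : IsUnit A0.det := by
    rcases hminC r0 with h | h | h
    · exact absurd h hdetA0
    · rw [h]; exact isUnit_one
    · rw [h]; exact isUnit_one.neg
  refine ⟨k, C, hliC, hminC, ?_⟩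
  apply le_antisymm
  · -- range M ⊆ range C : Cramer
    rintro w0 ⟨u, rfl⟩
    have hrw : M.mulVecLin u = M *ᵥ u := rfl
    rw [hrw]
    have hwq : (fun i => (((M *ᵥ u) i : ℤ) : ℚ)) ∈ LinearMap.range Cq.mulVecLin := by
      have hmem0 : (fun i => (((M *ᵥ u) i : ℤ) : ℚ)) ∈ LinearMap.range Mq.mulVecLin := by
        refine ⟨fun j => ((u j : ℤ) : ℚ), ?_⟩
        have h7 : Mq.mulVecLin (fun j => ((u j : ℤ) : ℚ)) = Mq *ᵥ (fun j => ((u j : ℤ) : ℚ)) := rfl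
        rw [h7, hMq, map_cast_mulVec]
      rw [Matrix.range_mulVecLin] at hmem0
      rw [Matrix.range_mulVecLin]
      have h1 : Set.range Cqᵀ = s := by rw [hCqT]; exact hrange
      rw [show Set.range Cq.col = Set.range Cqᵀ from rfl, h1, hsp]
      exact hmem0
    obtain ⟨x, hx⟩ := hwq
    rw [mulVecLin_apply] at hx
    set z := A0⁻¹ *ᵥ (fun i => (M *ᵥ u) (r0 i)) with hzdef
    have hxa : (Cq.submatrix ⇑r0 id) *ᵥ x = fun i => (((M *ᵥ u) (r0 i) : ℤ) : ℚ) := by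
      funext i
      have h5 := congrFun hx (r0 i)
      rw [← h5]
      simp [mulVec, dotProduct, submatrix_apply]
    have hza : (Cq.submatrix ⇑r0 id) *ᵥ (fun j => ((z j : ℤ) : ℚ))
        = fun i => (((M *ᵥ u) (r0 i) : ℤ) : ℚ) := by
      rw [hA0q, map_cast_mulVec]
      have : A0 *ᵥ z = fun i => (M *ᵥ u) (r0 i) := by
        rw [hzdef, mulVec_mulVec, mul_nonsing_inv _ hunitA0, one_mulVec]
      rw [this]
    have hdetq : IsUnit (Cq.submatrix ⇑r0 id).det := isUnit_iff_ne_zero.mpr hr0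
    have hxz : x = fun j => ((z j : ℤ) : ℚ) := by
      have hcancel := congrArg (fun y => (Cq.submatrix ⇑r0 id)⁻¹ *ᵥ y) (hxa.trans hza.symm)
      simpa [mulVec_mulVec, nonsing_inv_mul _ hdetq, one_mulVec] using hcancel
    refine ⟨z, ?_⟩
    rw [mulVecLin_apply]
    funext i
    have h6 : (((C *ᵥ z) i : ℤ) : ℚ) = (((M *ᵥ u) i : ℤ) : ℚ) := by
      have h1 := congrFun (map_cast_mulVec C z) i
      rw [← hCqC] at h1
      rw [← h1]
      have h2 := congrFun hx i
      rw [hxz] at h2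
      exact h2
    exact_mod_cast h6
  · -- range C ⊆ range M
    rw [Matrix.range_mulVecLin, Matrix.range_mulVecLin]
    apply Submodule.span_mono
    rintro _ ⟨j, rfl⟩
    exact ⟨g j, rfl⟩

end Aux

/-- coordinate projections of a unimodular lattice are unimodular. -/
theorem isUnimodular_map_proj {n : ℕ} (L : Submodule ℤ (Fin n → ℤ)) (hL : IsUnimodular L)
    (T : Finset (Fin n)) :
    IsUnimodular (Submodule.map (LinearMap.funLeft ℤ ℤ (fun i : ↥T => (i : Fin n))) L) := by
  classical
  obtain ⟨m, B, hli, hmin, hLeq⟩ := hL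
  have hliQ : LinearIndependent ℚ (B.map (fun x : ℤ => (x : ℚ)))ᵀ := by
    have h0 := liQ_of_liZ (v := Bᵀ) hli
    have hfun : (B.map (fun x : ℤ => (x : ℚ)))ᵀ = fun j => (fun i => ((Bᵀ j i : ℤ) : ℚ)) := by
      funext j i
      rfl
    rw [hfun]
    exact h0
  obtain ⟨r, hr⟩ := exists_sq_det_ne_zero _ hliQ
  have hdetcast : (((B.submatrix ⇑r id).det : ℤ) : ℚ)
      = (((B.map (fun x : ℤ => (x : ℚ))).submatrix ⇑r id)).det := by
    rw [submatrix_map]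
    exact RingHom.map_det (Int.castRingHom ℚ) _
  have hdetZ : (B.submatrix ⇑r id).det ≠ 0 := by
    intro h0
    apply hr
    rw [← hdetcast, h0, Int.cast_zero]
  have hdet1 : (B.submatrix ⇑r id).det = 1 ∨ (B.submatrix ⇑r id).det = -1 := by
    rcases hmin r with h | h | h
    · exact absurd h hdetZ
    · exact Or.inl h
    · exact Or.inr h
  have hunit : IsUnit (B.submatrix ⇑r id).det := by
    rcases hdet1 with h | h <;> rw [h]
    · exact isUnit_one
    · exact isUnit_one.neg
  set A := B.submatrix ⇑r id with hAdef
  set B₁ := B * A⁻¹ with hB₁def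
  have hone : B₁.submatrix ⇑r id = 1 := by
    have hsub : B₁.submatrix ⇑r id = A * A⁻¹ := by
      ext i j
      simp [hB₁def, mul_apply, hAdef]
    rw [hsub, mul_nonsing_inv _ hunit]
  have hinvdet : Ring.inverse A.det = 1 ∨ Ring.inverse A.det = -1 := by
    rcases hdet1 with h | h <;> rw [h]
    · left; exact Ring.inverse_one ℤ
    · right
      have : ((-1 : ℤˣ) : ℤ) = (-1 : ℤ) := by simp
      rw [← this, Ring.inverse_unit]
      simp
  have hmin₁ : ∀ s : Fin m ↪ Fin n, (B₁.submatrix ⇑s id).det ∈ ({0, 1, -1} : Set ℤ) := by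
    intro s
    have hsub : B₁.submatrix ⇑s id = (B.submatrix ⇑s id) * A⁻¹ := by
      ext i j
      simp [hB₁def, mul_apply]
    rw [hsub, det_mul, det_nonsing_inv]
    rcases hmin s with h | h | h <;> rcases hinvdet with h' | h' <;> rw [h, h'] <;> simp
  have hTU : B₁.IsTotallyUnimodular := isTU_of_minors B₁ r hone hmin₁
  have hrg : LinearMap.range B₁.mulVecLin = LinearMap.range B.mulVecLin := by
    rw [hB₁def, mulVecLin_mul]
    apply LinearMap.range_comp_of_range_eq_top
    rw [LinearMap.range_eq_top]
    intro y
    refine ⟨A *ᵥ y, ?_⟩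
    rw [mulVecLin_apply, mulVec_mulVec, nonsing_inv_mul _ hunit, one_mulVec]
  rw [hLeq, ← hrg, map_funLeft_range B₁ (fun i : ↥T => (i : Fin n))]
  exact isUnimodular_range_of_TU _ (hTU.submatrix _ _)
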